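/- Degenerate Baillon–Haddad theorem, cocoercivity part (Lemma 2.3(i)): Let x₁, x₂ ∈ H and let w₁, w₂ ∈ (ker Q)ᗮ satisfy Q w₁ = B x₁ and Q w₂ = B x₂ (so wᵢ is the pseudo-inverse image Q†(B xᵢ)). Then β · ⟪Q (x₁ − x₂), w₁ − w₂⟫ ≥ ν · ⟪Q (w₁ − w₂), w₁ − w₂⟫; in other words, Q†B is Q-based (ν/β)-cocoercive. -/

import Mathlib

open RealInnerProductSpace

/-- Degenerate Baillon–Haddad theorem, cocoercivity part (Lemma 2.3(i)):
`Q†B` is `Q`-based `(ν/β)`-cocoercive. -/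
theorem stmt_0
    {H : Type*} [NormedAddCommGroup H] [InnerProductSpace ℝ H] [CompleteSpace H]
    (Q : H →L[ℝ] H)
    (hQsym : ∀ x y : H, ⟪Q x, y⟫ = ⟪x, Q y⟫)
    (hQpos : ∀ x : H, 0 ≤ ⟪Q x, x⟫)
    (ν : ℝ) (hν : 0 < ν)
    (hνQ : ∀ w ∈ (LinearMap.ker (Q : H →ₗ[ℝ] H))ᗮ, ν * ‖w‖ ≤ ‖Q w‖)
    (β : ℝ) (hβ : 0 ≤ β)
    (B : H → H)
    (hB : ∀ x y : H, ‖B x - B y‖ ^ 2 ≤ β * ⟪B x - B y, x - y⟫)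
    (hranB : Set.range B ⊆ Set.range Q)
    (x₁ x₂ w₁ w₂ : H)
    (hw₁ : w₁ ∈ (LinearMap.ker (Q : H →ₗ[ℝ] H))ᗮ) (hw₂ : w₂ ∈ (LinearMap.ker (Q : H →ₗ[ℝ] H))ᗮ)
    (hQw₁ : Q w₁ = B x₁) (hQw₂ : Q w₂ = B x₂) :
    ν * ⟪Q (w₁ - w₂), w₁ - w₂⟫ ≤ β * ⟪Q (x₁ - x₂), w₁ - w₂⟫ := by
  set w := w₁ - w₂ with hw
  have hwmem : w ∈ (LinearMap.ker (Q : H →ₗ[ℝ] H))ᗮ := Submodule.sub_mem _ hw₁ hw₂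
  have hQw : Q w = B x₁ - B x₂ := by simp [hw, hQw₁, hQw₂]
  have h1 : ν * ‖w‖ ≤ ‖Q w‖ := hνQ w hwmem
  have hCS : ⟪Q w, w⟫ ≤ ‖Q w‖ * ‖w‖ := real_inner_le_norm _ _
  have h2 : ν * ⟪Q w, w⟫ ≤ ‖Q w‖ ^ 2 := by
    calc ν * ⟪Q w, w⟫ ≤ ν * (‖Q w‖ * ‖w‖) := by
          exact mul_le_mul_of_nonneg_left hCS hν.le
      _ = ‖Q w‖ * (ν * ‖w‖) := by ring
      _ ≤ ‖Q w‖ * ‖Q w‖ := mul_le_mul_of_nonneg_left h1 (norm_nonneg _)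
      _ = ‖Q w‖ ^ 2 := (sq ‖Q w‖).symm
  have h3 : ‖Q w‖ ^ 2 ≤ β * ⟪Q w, x₁ - x₂⟫ := by
    rw [hQw]; exact hB x₁ x₂
  have h4 : ⟪Q w, x₁ - x₂⟫ = ⟪Q (x₁ - x₂), w⟫ := by
    rw [hQsym w (x₁ - x₂), real_inner_comm]
  linarith [h2, h3, h4 ▸ h3]
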